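/- arXiv:1402.6819 — 2 statements merged into one kernel-verified Lean document; each statement's English description precedes it below -/
import Mathlib

section
/- Under Hypothesis A, let j ∈ {1,…,N−1} and λ_1,…,λ_N > 0, and set s_k(n) = exp(−λ_k n^{−γ_k}). Then for every sequence (m_n) of natural numbers with m_n / n^{γ_j} → 0, lim_{n→∞} n^{γ_j} · Q_{m_n}^{(j)}(s(n)) = λ_j. -/
open Filter Topology

noncomputable section

namespace BD

/-- The `j`-th coordinate (natural index) of a multi-index, `0` out of range. -/
def coord {N : ℕ} (k : Fin N → ℕ) (j : ℕ) : ℕ := if h : j < N then k ⟨j, h⟩ else 0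

/-- Offspring probability generating function of (0-based) type `i`:
`h_i(s) = E ∏_j s_j ^ η_{ij}`. -/
def pgf (N : ℕ) (η : ℕ → (Fin N → ℕ) → ℝ) (i : ℕ) (s : Fin N → ℝ) : ℝ :=
  ∑' k : Fin N → ℕ, η i k * ∏ j : Fin N, s j ^ k j

/-- Iterated generating functions: `Hgen N η n s i = H_n^{(i)}(s)`. -/
def Hgen (N : ℕ) (η : ℕ → (Fin N → ℕ) → ℝ) : ℕ → (Fin N → ℝ) → Fin N → ℝ
  | 0, s => s
  | n + 1, s => fun i => pgf N η i.1 (Hgen N η n s)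

/-- `Q_n^{(i)}(s) = 1 - H_n^{(i)}(s)`. -/
def Qfun (N : ℕ) (η : ℕ → (Fin N → ℕ) → ℝ) (n : ℕ) (s : Fin N → ℝ) (i : Fin N) : ℝ :=
  1 - Hgen N η n s i

/-- `Q_n^{(i)} = Q_n^{(i)}(0)`, the survival probability at time `n` started
from one particle of type `i`. -/
def Qsurv (N : ℕ) (η : ℕ → (Fin N → ℕ) → ℝ) (n : ℕ) (i : Fin N) : ℝ :=
  Qfun N η n (fun _ => 0) i

/-- Mean number of type-`j` children of a type-`i` particle. -/
def meanM (N : ℕ) (η : ℕ → (Fin N → ℕ) → ℝ) (i j : ℕ) : ℝ :=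
  ∑' k : Fin N → ℕ, η i k * (coord k j : ℝ)

/-- `b_i = Var(η_{ii}) / 2` (the mean of `η_{ii}` being `1`). -/
def bCoef (N : ℕ) (η : ℕ → (Fin N → ℕ) → ℝ) (i : ℕ) : ℝ :=
  (∑' k : Fin N → ℕ, η i k * ((coord k i : ℝ) - 1) ^ 2) / 2

/-- `m_{i,i+1}` (0-based). -/
def mCoef (N : ℕ) (η : ℕ → (Fin N → ℕ) → ℝ) (i : ℕ) : ℝ := meanM N η i (i + 1)

/-- Hypothesis A for the strongly critical decomposable process, types 0-based:
`η i` is the offspring distribution of type `i`, `0 ≤ i < N`. -/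
structure HypA (N : ℕ) (η : ℕ → (Fin N → ℕ) → ℝ) : Prop where
  nonneg : ∀ i, i < N → ∀ k, 0 ≤ η i k
  total : ∀ i, i < N → HasSum (η i) 1
  decomp : ∀ i, i < N → ∀ k, η i k ≠ 0 → ∀ j : Fin N, (j : ℕ) < i → k j = 0
  critical : ∀ i, i < N → HasSum (fun k : Fin N → ℕ => η i k * (coord k i : ℝ)) 1
  firstMom : ∀ i, i < N → ∀ j : ℕ,
    Summable (fun k : Fin N → ℕ => η i k * (coord k j : ℝ))
  secondMom : ∀ i, i < N → ∀ j l : ℕ,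
    Summable (fun k : Fin N → ℕ => η i k * ((coord k j : ℝ) * (coord k l : ℝ)))
  bPos : ∀ i, i < N → 0 < bCoef N η i
  mPos : ∀ i, i + 1 < N → 0 < mCoef N η i

/-- `γ` for the 0-based type `t`; equals the paper's `γ_i = 2^{-(N-i)}` for `i = t+1`. -/
def gam (N t : ℕ) : ℝ := (1 / 2 : ℝ) ^ (N - 1 - t)

/-- `γ` with the paper's 1-based indexing and `γ_0 = 0`. -/
def gamP (N i : ℕ) : ℝ := if i = 0 then 0 else (1 / 2 : ℝ) ^ (N - i)

/-- `c_{j,i}` built from abstract coefficients: `cAux b m t r = c_{t-r,t}` (0-based),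
`c_{tt} = 1/b_t`, `c_{st} = sqrt(m_s c_{s+1,t} / b_s)`. -/
def cAux (b m : ℕ → ℝ) (t : ℕ) : ℕ → ℝ
  | 0 => 1 / b t
  | r + 1 => Real.sqrt (m (t - (r + 1)) * cAux b m t r / b (t - (r + 1)))

/-- `d_{j,i}` built from abstract coefficients: `dAux b m t r = d_{t-r,t}` (0-based),
`d_{tt} = sqrt(m_t / b_t)`, `d_{st} = sqrt(m_s d_{s+1,t} / b_s)`. -/
def dAux (b m : ℕ → ℝ) (t : ℕ) : ℕ → ℝ
  | 0 => Real.sqrt (m t / b t)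
  | r + 1 => Real.sqrt (m (t - (r + 1)) * dAux b m t r / b (t - (r + 1)))

/-- Closed form of `c_{iN}` of the paper, with 0-based `t = i - 1`. -/
def cConst (N : ℕ) (η : ℕ → (Fin N → ℕ) → ℝ) (t : ℕ) : ℝ :=
  (1 / bCoef N η (N - 1)) ^ ((1 / 2 : ℝ) ^ (N - 1 - t)) *
    ∏ u ∈ Finset.Ico t (N - 1),
      (mCoef N η u / bCoef N η u) ^ ((1 / 2 : ℝ) ^ (u - t + 1))

/-- `D_i` of the paper, with 0-based `t = i - 1`. -/
def DConst (N : ℕ) (η : ℕ → (Fin N → ℕ) → ℝ) (t : ℕ) : ℝ :=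
  dAux (bCoef N η) (mCoef N η) t t

/-- The vector `s'` with `s'_j = 1 - (1 - s_j) Q_{n-m}^{(j)}`. -/
def sPrime (N : ℕ) (η : ℕ → (Fin N → ℕ) → ℝ) (m n : ℕ) (s : Fin N → ℝ) : Fin N → ℝ :=
  fun j => 1 - (1 - s j) * Qsurv N η (n - m) j

/-- Conditional generating function of the reduced process:
`J_{m,n}^{(i)}(s) = 1 - Q_m^{(i)}(s') / Q_n^{(i)}`. -/
def Jred (N : ℕ) (η : ℕ → (Fin N → ℕ) → ℝ) (m n : ℕ) (s : Fin N → ℝ) (i : Fin N) : ℝ :=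
  1 - Qfun N η m (sPrime N η m n s) i / Qsurv N η n i

/-- Joint conditional generating function of the reduced process along
a list of (absolute) observation times with marks, relative to the previous
time `prev`; the paper's `Ĵ` is `Jhat N η n 0 [(m₁,S₁),…,(m_p,S_p)]` at coordinate `0`. -/
def Jhat (N : ℕ) (η : ℕ → (Fin N → ℕ) → ℝ) (n : ℕ) : ℕ → List (ℕ × (Fin N → ℝ)) → Fin N → ℝ
  | _, [] => fun _ => 1
  | prev, (m, S) :: rest =>
      Jred N η (m - prev) (n - prev) (fun j => S j * Jhat N η n m rest j)

/-- `φ_i(y; u, v)` of the paper, with `a = b_i c_{iN}`. -/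
def phiLim (a y u v : ℝ) : ℝ :=
  if v = 1 then (1 - u) / (a * y * (1 - u) + 1)
  else
    Real.sqrt (1 - v) *
        ((1 - u) + Real.sqrt (1 - v) * Real.tanh (a * y * Real.sqrt (1 - v))) /
      ((1 - u) * Real.tanh (a * y * Real.sqrt (1 - v)) + Real.sqrt (1 - v))

/-- `Ψ_i(y; λ, μ)` with `b = b_i`, `m = m_{i,i+1}`. -/
def PsiLim (b m y lam mu : ℝ) : ℝ :=
  Real.sqrt (m * mu / b) *
      (b * lam + Real.sqrt (b * m * mu) * Real.tanh (y * Real.sqrt (b * m * mu))) /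
    (b * lam * Real.tanh (y * Real.sqrt (b * m * mu)) + Real.sqrt (b * m * mu))

/-- `ψ(x; s) = (1-s)/(x(1-s) + 1 - x)`. -/
def psiLim (x s : ℝ) : ℝ := (1 - s) / (x * (1 - s) + 1 - x)

/-- Product of the third components of a list of triples. -/
def vprod : List (ℝ × ℝ × ℝ) → ℝ
  | [] => 1
  | (_, _, v) :: rest => v * vprod rest

/-- The iterated `X_i^{(p)}` along a list of `(y, u, v)` triples; `a = b_i c_{iN}`:
`X^{(p)}((y,u,v)::rest) = X(y; u ⬝ X^{(p-1)}(rest), v ⬝ ∏ v')` where `X = 1 - φ`. -/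
def Xiter (a : ℝ) : List (ℝ × ℝ × ℝ) → ℝ
  | [] => 1
  | (y, u, v) :: rest => 1 - phiLim a y (u * Xiter a rest) (v * vprod rest)

/-- `G(x; s) = 1 - ψ(x; s)`. -/
def Gfun (x s : ℝ) : ℝ := 1 - psiLim x s

/-- Iterated `G^{(p)}` along a list of `(x, s)` pairs, with the rescaling
`x ↦ x/(1-x₁)` of the later increments. -/
def Giter : List (ℝ × ℝ) → ℝ
  | [] => 1
  | (x, s) :: rest => Gfun x (s * Giter (rest.map fun q => (q.1 / (1 - x), q.2)))
termination_by l => l.length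
decreasing_by simp [List.length_map]

/-- `s_k(n) = exp(-λ_k n^{-γ_k})`. -/
def sVec (N : ℕ) (lam : Fin N → ℝ) (n : ℕ) : Fin N → ℝ :=
  fun k => Real.exp (-(lam k) * (n : ℝ) ^ (-(gam N k.1)))


section Aux

lemma one_sub_prod_le {ι : Type*} (T : Finset ι) (f : ι → ℝ)
    (h0 : ∀ j ∈ T, 0 ≤ f j) (h1 : ∀ j ∈ T, f j ≤ 1) :
    1 - ∏ j ∈ T, f j ≤ ∑ j ∈ T, (1 - f j) := by
  classical
  induction T using Finset.induction_on with
  | empty => simp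
  | insert _ _ ha ih =>
    rename_i a T
    rw [Finset.prod_insert ha, Finset.sum_insert ha]
    have hP0 : 0 ≤ ∏ j ∈ T, f j := Finset.prod_nonneg fun j hj => h0 j (by simp [hj])
    have hP1 : ∏ j ∈ T, f j ≤ 1 :=
      Finset.prod_le_one (fun j hj => h0 j (by simp [hj])) (fun j hj => h1 j (by simp [hj]))
    have ih' := ih (fun j hj => h0 j (by simp [hj])) (fun j hj => h1 j (by simp [hj]))
    have ha0 : 0 ≤ f a := h0 a (by simp)
    have ha1 : f a ≤ 1 := h1 a (by simp)
    nlinarith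

lemma one_sub_pow_le (x : ℝ) (hx0 : 0 ≤ x) (k : ℕ) : 1 - x ^ k ≤ k * (1 - x) := by
  have h := one_add_mul_le_pow (a := x - 1) (by linarith) k
  have : 1 + (k : ℝ) * (x - 1) ≤ x ^ k := by simpa using h
  nlinarith

lemma one_sub_pow_ge (x : ℝ) (hx0 : 0 ≤ x) (hx1 : x ≤ 1) (k : ℕ) :
    (k : ℝ) * (1 - x) - ((k : ℝ) ^ 2 / 2) * (1 - x) ^ 2 ≤ 1 - x ^ k := by
  induction k with
  | zero => simp
  | succ k ih =>
    have hpk : x ^ k ≤ 1 := pow_le_one₀ hx0 hx1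
    have hpk0 : 0 ≤ x ^ k := pow_nonneg hx0 k
    have h1 : 1 - x ^ (k + 1) = (1 - x) + x * (1 - x ^ k) := by rw [pow_succ]; ring
    push_cast
    nlinarith [sq_nonneg (1 - x), mul_nonneg hx0 (sq_nonneg (1 - x)), sq_nonneg ((k:ℝ) * (1 - x))]

end Aux
section Basic

variable {N : ℕ} {η : ℕ → (Fin N → ℕ) → ℝ}

/-- `s` has all coordinates in `[0,1]`. -/
def box (s : Fin N → ℝ) : Prop := ∀ j, 0 ≤ s j ∧ s j ≤ 1

lemma coord_fin (k : Fin N → ℕ) (j : Fin N) : coord k (j : ℕ) = k j := by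
  simp [coord, j.2]

lemma summable_eta (hA : HypA N η) (i : Fin N) : Summable (η i.1) :=
  (hA.total i.1 i.2).summable

lemma prod_nonneg' {s : Fin N → ℝ} (hs : box s) (k : Fin N → ℕ) :
    0 ≤ ∏ j, s j ^ k j :=
  Finset.prod_nonneg fun j _ => pow_nonneg (hs j).1 _

lemma prod_le_one' {s : Fin N → ℝ} (hs : box s) (k : Fin N → ℕ) :
    ∏ j, s j ^ k j ≤ 1 :=
  Finset.prod_le_one (fun j _ => pow_nonneg (hs j).1 _)
    (fun j _ => pow_le_one₀ (hs j).1 (hs j).2)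

lemma summable_term (hA : HypA N η) (i : Fin N) {s : Fin N → ℝ} (hs : box s) :
    Summable (fun k : Fin N → ℕ => η i.1 k * ∏ j, s j ^ k j) := by
  refine (summable_eta hA i).of_nonneg_of_le
    (fun k => mul_nonneg (hA.nonneg i.1 i.2 k) (prod_nonneg' hs k)) (fun k => ?_)
  calc η i.1 k * ∏ j, s j ^ k j ≤ η i.1 k * 1 :=
        mul_le_mul_of_nonneg_left (prod_le_one' hs k) (hA.nonneg i.1 i.2 k)
    _ = η i.1 k := mul_one _

lemma summable_one_sub (hA : HypA N η) (i : Fin N) {s : Fin N → ℝ} (hs : box s) :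
    Summable (fun k : Fin N → ℕ => η i.1 k * (1 - ∏ j, s j ^ k j)) :=
  ((summable_eta hA i).sub (summable_term hA i hs)).congr fun k => by ring

lemma pgf_nonneg (hA : HypA N η) (i : Fin N) {s : Fin N → ℝ} (hs : box s) :
    0 ≤ pgf N η i.1 s :=
  tsum_nonneg fun k => mul_nonneg (hA.nonneg i.1 i.2 k) (prod_nonneg' hs k)

lemma pgf_le_one (hA : HypA N η) (i : Fin N) {s : Fin N → ℝ} (hs : box s) :
    pgf N η i.1 s ≤ 1 := by
  have h := Summable.tsum_le_tsum (f := fun k : Fin N → ℕ => η i.1 k * ∏ j, s j ^ k j)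
    (g := η i.1) (fun k => by
      calc η i.1 k * ∏ j, s j ^ k j ≤ η i.1 k * 1 :=
            mul_le_mul_of_nonneg_left (prod_le_one' hs k) (hA.nonneg i.1 i.2 k)
        _ = η i.1 k := mul_one _)
    (summable_term hA i hs) (summable_eta hA i)
  calc pgf N η i.1 s ≤ ∑' k, η i.1 k := h
    _ = 1 := (hA.total i.1 i.2).tsum_eq

lemma one_sub_pgf (hA : HypA N η) (i : Fin N) {s : Fin N → ℝ} (hs : box s) :
    1 - pgf N η i.1 s = ∑' k : Fin N → ℕ, η i.1 k * (1 - ∏ j, s j ^ k j) := by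
  rw [pgf, show ∑' k : Fin N → ℕ, η i.1 k * (1 - ∏ j, s j ^ k j)
      = ∑' k : Fin N → ℕ, (η i.1 k - η i.1 k * ∏ j, s j ^ k j) from
    tsum_congr fun k => by ring,
    Summable.tsum_sub (summable_eta hA i) (summable_term hA i hs), (hA.total i.1 i.2).tsum_eq]

lemma Hgen_box (hA : HypA N η) (n : ℕ) {s : Fin N → ℝ} (hs : box s) :
    box (Hgen N η n s) := by
  induction n with
  | zero => exact hs
  | succ n ih =>
    intro i
    exact ⟨pgf_nonneg hA i ih, pgf_le_one hA i ih⟩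

lemma Qfun_nonneg (hA : HypA N η) (n : ℕ) {s : Fin N → ℝ} (hs : box s) (i : Fin N) :
    0 ≤ Qfun N η n s i := by
  have := (Hgen_box hA n hs i).2
  simp only [Qfun]; linarith

lemma Qfun_le_one (hA : HypA N η) (n : ℕ) {s : Fin N → ℝ} (hs : box s) (i : Fin N) :
    Qfun N η n s i ≤ 1 := by
  have := (Hgen_box hA n hs i).1
  simp only [Qfun]; linarith

end Basic
section Moments

variable {N : ℕ} {η : ℕ → (Fin N → ℕ) → ℝ}

lemma meanM_nonneg (hA : HypA N η) (i : Fin N) (j : ℕ) : 0 ≤ meanM N η i.1 j :=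
  tsum_nonneg fun k => mul_nonneg (hA.nonneg i.1 i.2 k) (Nat.cast_nonneg _)

lemma meanM_self (hA : HypA N η) (i : Fin N) : meanM N η i.1 i.1 = 1 :=
  (hA.critical i.1 i.2).tsum_eq

lemma meanM_low (hA : HypA N η) (i j : Fin N) (h : (j : ℕ) < (i : ℕ)) :
    meanM N η i.1 j.1 = 0 := by
  have hz : ∀ k : Fin N → ℕ, η i.1 k * (coord k j.1 : ℝ) = 0 := by
    intro k
    by_cases hk : η i.1 k = 0
    · simp [hk]
    · rw [coord_fin, hA.decomp i.1 i.2 k hk j h]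
      simp
  simp [meanM, hz, tsum_zero]

lemma summable_first (hA : HypA N η) (i j : Fin N) :
    Summable (fun k : Fin N → ℕ => η i.1 k * (k j : ℝ)) :=
  (hA.firstMom i.1 i.2 j.1).congr fun k => by rw [coord_fin]

lemma pgf_upper (hA : HypA N η) (i : Fin N) {s : Fin N → ℝ} (hs : box s) :
    1 - pgf N η i.1 s ≤ ∑ j : Fin N, meanM N η i.1 j.1 * (1 - s j) := by
  rw [one_sub_pgf hA i hs]
  have hsum2 : ∀ j : Fin N, Summable (fun k : Fin N → ℕ => η i.1 k * (k j : ℝ) * (1 - s j)) :=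
    fun j => (summable_first hA i j).mul_right _
  have key : ∀ k : Fin N → ℕ,
      η i.1 k * (1 - ∏ j, s j ^ k j) ≤ ∑ j : Fin N, η i.1 k * (k j : ℝ) * (1 - s j) := by
    intro k
    have h1 : 1 - ∏ j, s j ^ k j ≤ ∑ j : Fin N, (k j : ℝ) * (1 - s j) := by
      calc 1 - ∏ j, s j ^ k j ≤ ∑ j : Fin N, (1 - s j ^ k j) :=
            one_sub_prod_le Finset.univ _ (fun j _ => pow_nonneg (hs j).1 _)
              (fun j _ => pow_le_one₀ (hs j).1 (hs j).2)
        _ ≤ ∑ j : Fin N, (k j : ℝ) * (1 - s j) :=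
            Finset.sum_le_sum fun j _ => one_sub_pow_le (s j) (hs j).1 (k j)
    calc η i.1 k * (1 - ∏ j, s j ^ k j) ≤ η i.1 k * ∑ j : Fin N, (k j : ℝ) * (1 - s j) :=
          mul_le_mul_of_nonneg_left h1 (hA.nonneg i.1 i.2 k)
      _ = ∑ j : Fin N, η i.1 k * (k j : ℝ) * (1 - s j) := by
          rw [Finset.mul_sum]; exact Finset.sum_congr rfl fun j _ => by ring
  calc (∑' k : Fin N → ℕ, η i.1 k * (1 - ∏ j, s j ^ k j))
      ≤ ∑' k : Fin N → ℕ, ∑ j : Fin N, η i.1 k * (k j : ℝ) * (1 - s j) :=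
        Summable.tsum_le_tsum key (summable_one_sub hA i hs)
          (summable_sum fun j _ => hsum2 j)
    _ = ∑ j : Fin N, ∑' k : Fin N → ℕ, η i.1 k * (k j : ℝ) * (1 - s j) :=
        Summable.tsum_finsetSum fun j _ => hsum2 j
    _ = ∑ j : Fin N, meanM N η i.1 j.1 * (1 - s j) := by
        refine Finset.sum_congr rfl fun j _ => ?_
        rw [tsum_mul_right, meanM]
        congr 1
        exact tsum_congr fun k => by rw [coord_fin]

/-- `B_i`: half the second factorial-ish moment bound used in the lower estimate. -/
def Bco (N : ℕ) (η : ℕ → (Fin N → ℕ) → ℝ) (i : ℕ) : ℝ :=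
  (∑' k : Fin N → ℕ, η i k * ((coord k i : ℝ) * (coord k i : ℝ))) / 2

lemma Bco_nonneg (hA : HypA N η) (i : Fin N) : 0 ≤ Bco N η i.1 :=
  div_nonneg (tsum_nonneg fun k => mul_nonneg (hA.nonneg i.1 i.2 k)
    (mul_nonneg (Nat.cast_nonneg _) (Nat.cast_nonneg _))) two_pos.le

lemma pgf_lower (hA : HypA N η) (i : Fin N) {s : Fin N → ℝ} (hs : box s) :
    (1 - s i) - Bco N η i.1 * (1 - s i) ^ 2 ≤ 1 - pgf N η i.1 s := by
  rw [one_sub_pgf hA i hs]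
  set y : ℝ := 1 - s i with hy
  have hy0 : 0 ≤ y := by have := (hs i).2; simp [hy]; linarith
  have sum1 : Summable (fun k : Fin N → ℕ => η i.1 k * (k i : ℝ) * y) :=
    (summable_first hA i i).mul_right _
  have sum2 : Summable (fun k : Fin N → ℕ =>
      η i.1 k * ((k i : ℝ) * (k i : ℝ)) * (y ^ 2 / 2)) :=
    ((hA.secondMom i.1 i.2 i.1 i.1).congr
      (fun k => by rw [coord_fin])).mul_right _
  have lowpt : ∀ k : Fin N → ℕ,
      η i.1 k * (k i : ℝ) * y - η i.1 k * ((k i : ℝ) * (k i : ℝ)) * (y ^ 2 / 2)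
        ≤ η i.1 k * (1 - ∏ j, s j ^ k j) := by
    intro k
    have hprod : ∏ j, s j ^ k j ≤ s i ^ k i := by
      rw [← Finset.mul_prod_erase Finset.univ (fun j => s j ^ k j) (Finset.mem_univ i)]
      have h1 : ∏ j ∈ Finset.univ.erase i, s j ^ k j ≤ 1 :=
        Finset.prod_le_one (fun j _ => pow_nonneg (hs j).1 _)
          (fun j _ => pow_le_one₀ (hs j).1 (hs j).2)
      have h2 : 0 ≤ s i ^ k i := pow_nonneg (hs i).1 _
      nlinarith [Finset.prod_nonneg (fun j (_ : j ∈ Finset.univ.erase i) => pow_nonneg (hs j).1 (k j))]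
    have hpow := one_sub_pow_ge (s i) (hs i).1 (hs i).2 (k i)
    have hmid : (k i : ℝ) * y - ((k i : ℝ) ^ 2 / 2) * y ^ 2 ≤ 1 - ∏ j, s j ^ k j := by
      rw [hy]; linarith
    have := mul_le_mul_of_nonneg_left hmid (hA.nonneg i.1 i.2 k)
    nlinarith [this]
  have hts := Summable.tsum_le_tsum lowpt (sum1.sub sum2) (summable_one_sub hA i hs)
  have heq : (∑' k : Fin N → ℕ,
      (η i.1 k * (k i : ℝ) * y - η i.1 k * ((k i : ℝ) * (k i : ℝ)) * (y ^ 2 / 2)))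
      = y - Bco N η i.1 * y ^ 2 := by
    rw [Summable.tsum_sub sum1 sum2, tsum_mul_right, tsum_mul_right]
    have e1 : (∑' k : Fin N → ℕ, η i.1 k * (k i : ℝ)) = 1 := by
      rw [show (∑' k : Fin N → ℕ, η i.1 k * (k i : ℝ))
          = ∑' k : Fin N → ℕ, η i.1 k * (coord k i.1 : ℝ) from
        tsum_congr fun k => by rw [coord_fin], (hA.critical i.1 i.2).tsum_eq]
    have e2 : (∑' k : Fin N → ℕ, η i.1 k * ((k i : ℝ) * (k i : ℝ)))
        = 2 * Bco N η i.1 := by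
      rw [show (∑' k : Fin N → ℕ, η i.1 k * ((k i : ℝ) * (k i : ℝ)))
          = ∑' k : Fin N → ℕ, η i.1 k * ((coord k i.1 : ℝ) * (coord k i.1 : ℝ)) from
        tsum_congr fun k => by rw [coord_fin], Bco]
      ring
    rw [e1, e2]; ring
  rw [heq] at hts
  exact hts

end Moments
section Iterate

variable {N : ℕ} {η : ℕ → (Fin N → ℕ) → ℝ}

lemma Qfun_succ (n : ℕ) (s : Fin N → ℝ) (i : Fin N) :
    Qfun N η (n + 1) s i = 1 - pgf N η i.1 (Hgen N η n s) := rfl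

lemma step_upper (hA : HypA N η) (n : ℕ) {s : Fin N → ℝ} (hs : box s) (i : Fin N) :
    Qfun N η (n + 1) s i ≤ Qfun N η n s i +
      ∑ j : Fin N, (if (i : ℕ) < (j : ℕ) then meanM N η i.1 j.1 * Qfun N η n s j else 0) := by
  have h0 := pgf_upper hA i (Hgen_box hA n hs)
  rw [Qfun_succ]
  have h1 : ∑ j : Fin N, meanM N η i.1 j.1 * (1 - Hgen N η n s j)
      = ∑ j : Fin N, meanM N η i.1 j.1 * Qfun N η n s j := rfl
  rw [h1] at h0
  refine h0.trans ?_
  have h2 : ∀ j : Fin N, meanM N η i.1 j.1 * Qfun N η n s j ≤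
      (if j = i then Qfun N η n s i else 0) +
      (if (i : ℕ) < (j : ℕ) then meanM N η i.1 j.1 * Qfun N η n s j else 0) := by
    intro j
    rcases lt_trichotomy (j : ℕ) (i : ℕ) with h | h | h
    · rw [meanM_low hA i j h]
      have : j ≠ i := fun e => by simp [e] at h
      simp [this, h, Nat.not_lt.mpr h.le, not_lt_of_gt h]
    · have : j = i := Fin.ext h
      subst this
      rw [meanM_self hA j]
      simp
    · have : j ≠ i := fun e => by simp [e] at h
      simp [this, h]
  calc ∑ j : Fin N, meanM N η i.1 j.1 * Qfun N η n s j
      ≤ ∑ j : Fin N, ((if j = i then Qfun N η n s i else 0) +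
          (if (i : ℕ) < (j : ℕ) then meanM N η i.1 j.1 * Qfun N η n s j else 0)) :=
        Finset.sum_le_sum fun j _ => h2 j
    _ = Qfun N η n s i +
        ∑ j : Fin N, (if (i : ℕ) < (j : ℕ) then meanM N η i.1 j.1 * Qfun N η n s j else 0) := by
        rw [Finset.sum_add_distrib, Finset.sum_ite_eq' Finset.univ i
          (fun _ => Qfun N η n s i)]
        simp

lemma step_lower (hA : HypA N η) (n : ℕ) {s : Fin N → ℝ} (hs : box s) (i : Fin N) :
    Qfun N η n s i - Bco N η i.1 * (Qfun N η n s i) ^ 2 ≤ Qfun N η (n + 1) s i := by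
  rw [Qfun_succ]
  exact pgf_lower hA i (Hgen_box hA n hs)

lemma iter_upper (hA : HypA N η) {s : Fin N → ℝ} (hs : box s) (i : Fin N) (D : ℝ) (r : ℕ)
    (hD : ∀ p, p < r →
      ∑ j : Fin N, (if (i : ℕ) < (j : ℕ) then meanM N η i.1 j.1 * Qfun N η p s j else 0) ≤ D) :
    Qfun N η r s i ≤ Qfun N η 0 s i + r * D := by
  induction r with
  | zero => simp
  | succ r ih =>
    have h1 := step_upper hA r hs i
    have h2 := hD r (Nat.lt_succ_self r)
    have h3 := ih fun p hp => hD p (hp.trans (Nat.lt_succ_self r))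
    push_cast
    push_cast at h3
    linarith

lemma iter_lower (hA : HypA N η) {s : Fin N → ℝ} (hs : box s) (i : Fin N) (C : ℝ)
    (hC0 : 0 ≤ C) (r : ℕ) (hC : ∀ p, p < r → Qfun N η p s i ≤ C) :
    Qfun N η 0 s i - r * (Bco N η i.1 * C ^ 2) ≤ Qfun N η r s i := by
  induction r with
  | zero => simp
  | succ r ih =>
    have h1 := step_lower hA r hs i
    have hq0 := Qfun_nonneg hA r hs i
    have hqC := hC r (Nat.lt_succ_self r)
    have hB := Bco_nonneg hA i
    have h3 := ih fun p hp => hC p (hp.trans (Nat.lt_succ_self r))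
    have hsq : (Qfun N η r s i) ^ 2 ≤ C ^ 2 := by nlinarith
    push_cast
    push_cast at h3
    nlinarith [mul_le_mul_of_nonneg_left hsq hB]

end Iterate
section Gamma

lemma gam_pos (N t : ℕ) : 0 < gam N t := by
  unfold gam; positivity

lemma gam_mono (N : ℕ) {t l : ℕ} (h : t ≤ l) : gam N t ≤ gam N l := by
  unfold gam
  exact pow_le_pow_of_le_one (by norm_num) (by norm_num) (Nat.sub_le_sub_left h _)

lemma gam_succ (N j : ℕ) (h : j + 1 < N) : gam N (j + 1) = 2 * gam N j := by
  unfold gam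
  have h1 : N - 1 - j = (N - 1 - (j + 1)) + 1 := by omega
  rw [h1, pow_succ]
  ring

lemma sVec_box {N : ℕ} (lam : Fin N → ℝ) (hlam : ∀ k, 0 < lam k) (n : ℕ) :
    box (sVec N lam n) := by
  intro k
  constructor
  · exact (Real.exp_pos _).le
  · rw [sVec]
    have h1 : (0:ℝ) ≤ (n : ℝ) ^ (-(gam N k.1)) := Real.rpow_nonneg (Nat.cast_nonneg n) _
    have h2 : -(lam k) * (n : ℝ) ^ (-(gam N k.1)) ≤ 0 := by
      have := (hlam k).le
      nlinarith
    exact Real.exp_le_one_iff.mpr h2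

lemma one_sub_exp_le (x : ℝ) : 1 - Real.exp (-x) ≤ x := by
  have := Real.add_one_le_exp (-x)
  linarith

lemma lim_Q0 {N : ℕ} (lam : Fin N → ℝ) (hlam : ∀ k, 0 < lam k) (j : Fin N) :
    Tendsto (fun n : ℕ => (n : ℝ) ^ (gam N j.1) *
      (1 - Real.exp (-(lam j) * (n : ℝ) ^ (-(gam N j.1))))) atTop (nhds (lam j)) := by
  set γ := gam N j.1 with hγ
  have hγ0 : 0 < γ := gam_pos N j.1
  set y : ℕ → ℝ := fun n => lam j * (n : ℝ) ^ (-γ) with hydef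
  have hy0 : Tendsto y atTop (nhds 0) := by
    have h1 : Tendsto (fun n : ℕ => (n : ℝ) ^ (-γ)) atTop (nhds 0) :=
      (tendsto_rpow_neg_atTop hγ0).comp tendsto_natCast_atTop_atTop
    have := h1.const_mul (lam j)
    simpa using this
  have hyne : ∀ᶠ n : ℕ in atTop, y n ≠ 0 := by
    filter_upwards [eventually_ge_atTop 1] with n hn
    have hn0 : (0:ℝ) < n := by exact_mod_cast Nat.lt_of_lt_of_le Nat.zero_lt_one hn
    have : 0 < y n := mul_pos (hlam j) (Real.rpow_pos_of_pos hn0 _)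
    exact ne_of_gt this
  have hyW : Tendsto y atTop (nhdsWithin 0 {(0:ℝ)}ᶜ) :=
    tendsto_nhdsWithin_iff.mpr ⟨hy0, hyne⟩
  have hderiv : HasDerivAt (fun u : ℝ => 1 - Real.exp (-u)) 1 0 := by
    have h1 : HasDerivAt (fun u : ℝ => Real.exp (-u)) (-1) 0 := by
      have := (Real.hasDerivAt_exp (-0:ℝ)).comp 0 ((hasDerivAt_id (0:ℝ)).neg)
      simpa [Function.comp_def] using this
    have := h1.const_sub 1
    simpa using this
  have hslope : Tendsto (slope (fun u : ℝ => 1 - Real.exp (-u)) 0)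
      (nhdsWithin 0 {(0:ℝ)}ᶜ) (nhds 1) := hasDerivAt_iff_tendsto_slope.mp hderiv
  have hcomp : Tendsto (fun n : ℕ => lam j * slope (fun u : ℝ => 1 - Real.exp (-u)) 0 (y n))
      atTop (nhds (lam j)) := by
    have := (hslope.comp hyW).const_mul (lam j)
    simpa using this
  refine hcomp.congr' ?_
  filter_upwards [eventually_ge_atTop 1] with n hn
  have hn0 : (0:ℝ) < n := by exact_mod_cast Nat.lt_of_lt_of_le Nat.zero_lt_one hn
  have hrp : (0:ℝ) < (n : ℝ) ^ (-γ) := Real.rpow_pos_of_pos hn0 _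
  have hyn : y n = lam j * (n : ℝ) ^ (-γ) := rfl
  have hinv : (n : ℝ) ^ γ * (n : ℝ) ^ (-γ) = 1 := by
    rw [← Real.rpow_add hn0]
    simp
  rw [slope_def_field]
  field_simp
  simp only [neg_zero, Real.exp_zero, sub_self, sub_zero]
  rw [div_eq_iff (ne_of_gt (show (0:ℝ) < y n from mul_pos (hlam j) hrp))]
  have hyy : y n = lam j * (n:ℝ) ^ (-γ) := rfl
  rw [hyy]
  linear_combination (-(lam j * (1 - Real.exp (-(lam j * (n:ℝ) ^ (-γ)))))) * hinv

end Gamma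
section MainBound

variable {N : ℕ} {η : ℕ → (Fin N → ℕ) → ℝ}

lemma uniform_upper (hA : HypA N η) (t : ℕ)
    (lam : Fin N → ℝ) (hlam : ∀ k, 0 < lam k)
    (m : ℕ → ℕ)
    (hm : Tendsto (fun n : ℕ => (m n : ℝ) / (n : ℝ) ^ gam N t) atTop (nhds 0)) :
    ∀ d : ℕ, ∀ j : Fin N, t ≤ j.1 → N - 1 - j.1 = d → ∀ ε : ℝ, 0 < ε →
      ∀ᶠ n : ℕ in atTop, ∀ r, r ≤ m n →
        Qfun N η r (sVec N lam n) j ≤ (lam j + ε) * (n : ℝ) ^ (-(gam N j.1)) := by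
  intro d
  induction d using Nat.strong_induction_on with
  | _ d ih =>
    intro j htj hd ε hε
    have hlev : ∀ᶠ n : ℕ in atTop, ∀ l : Fin N, (j : ℕ) < (l : ℕ) → ∀ r, r ≤ m n →
        Qfun N η r (sVec N lam n) l ≤ (lam l + 1) * (n : ℝ) ^ (-(gam N l.1)) := by
      rw [eventually_all]
      intro l
      by_cases hl : (j : ℕ) < (l : ℕ)
      · have hlN : (l : ℕ) < N := l.2
        have hd' : N - 1 - (l : ℕ) < d := by omega
        filter_upwards [ih (N - 1 - (l : ℕ)) hd' l (le_trans htj hl.le) rfl 1 one_pos]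
          with n hn
        intro _ r hr; exact hn r hr
      · filter_upwards with n hl' r hr; exact absurd hl' hl
    set A : ℝ := ∑ l : Fin N,
      (if (j : ℕ) < (l : ℕ) then meanM N η j.1 l.1 * (lam l + 1) else 0) with hAdef
    have hA0 : 0 ≤ A := Finset.sum_nonneg fun l _ => by
      by_cases h : (j : ℕ) < (l : ℕ)
      · simp only [h, if_true]
        exact mul_nonneg (meanM_nonneg hA j l.1) (by linarith [hlam l])
      · simp [h]
    have hδ : 0 < ε / (A + 1) := div_pos hε (by linarith)
    have hmev : ∀ᶠ n : ℕ in atTop, (m n : ℝ) ≤ ε / (A + 1) * (n : ℝ) ^ gam N t := by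
      have h1 : ∀ᶠ n : ℕ in atTop, (m n : ℝ) / (n : ℝ) ^ gam N t < ε / (A + 1) :=
        hm.eventually_lt_const hδ
      filter_upwards [h1, eventually_ge_atTop 1] with n h1n hn1
      have hn0 : (0:ℝ) < n := by exact_mod_cast Nat.lt_of_lt_of_le Nat.zero_lt_one hn1
      have hp : (0:ℝ) < (n : ℝ) ^ gam N t := Real.rpow_pos_of_pos hn0 _
      have := (div_lt_iff₀ hp).mp h1n
      linarith
    filter_upwards [hlev, hmev, eventually_ge_atTop 1] with n hlevn hmn hn1
    intro r hr
    have hn0 : (0:ℝ) < n := by exact_mod_cast Nat.lt_of_lt_of_le Nat.zero_lt_one hn1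
    have hn1' : (1:ℝ) ≤ (n : ℝ) := by exact_mod_cast hn1
    have hbox := sVec_box lam hlam n
    have hγ0 := gam_pos N j.1
    set γ := gam N j.1 with hγdef
    have hx2 : (0:ℝ) < (n : ℝ) ^ (-(2 * γ)) := Real.rpow_pos_of_pos hn0 _
    have hnγ : (0:ℝ) < (n : ℝ) ^ (-γ) := Real.rpow_pos_of_pos hn0 _
    have hD : ∀ p, p < r →
        ∑ l : Fin N, (if (j : ℕ) < (l : ℕ)
          then meanM N η j.1 l.1 * Qfun N η p (sVec N lam n) l else 0)
          ≤ A * (n : ℝ) ^ (-(2 * γ)) := by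
      intro p hp
      rw [hAdef, Finset.sum_mul]
      refine Finset.sum_le_sum fun l _ => ?_
      by_cases hl : (j : ℕ) < (l : ℕ)
      · rw [if_pos hl, if_pos hl]
        have hql := hlevn l hl p (le_trans hp.le hr)
        have hexp : (n : ℝ) ^ (-(gam N l.1)) ≤ (n : ℝ) ^ (-(2 * γ)) := by
          apply Real.rpow_le_rpow_of_exponent_le hn1'
          have h1 : gam N ((j : ℕ) + 1) ≤ gam N l.1 := gam_mono N hl
          have h2 : gam N ((j : ℕ) + 1) = 2 * gam N j.1 :=
            gam_succ N j.1 (lt_of_le_of_lt hl l.2)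
          rw [hγdef]; linarith
        have hM := meanM_nonneg hA j l.1
        have hll : (0:ℝ) ≤ lam l + 1 := by linarith [hlam l]
        calc meanM N η j.1 l.1 * Qfun N η p (sVec N lam n) l
            ≤ meanM N η j.1 l.1 * ((lam l + 1) * (n : ℝ) ^ (-(gam N l.1))) :=
              mul_le_mul_of_nonneg_left hql hM
          _ ≤ meanM N η j.1 l.1 * ((lam l + 1) * (n : ℝ) ^ (-(2 * γ))) :=
              mul_le_mul_of_nonneg_left
                (mul_le_mul_of_nonneg_left hexp hll) hM
          _ = meanM N η j.1 l.1 * (lam l + 1) * (n : ℝ) ^ (-(2 * γ)) := by ring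
      · simp [hl]
    have hiter := iter_upper hA hbox j (A * (n : ℝ) ^ (-(2 * γ))) r hD
    have hQ0 : Qfun N η 0 (sVec N lam n) j
        = 1 - Real.exp (-(lam j) * (n : ℝ) ^ (-γ)) := rfl
    have hQ0le : Qfun N η 0 (sVec N lam n) j ≤ lam j * (n : ℝ) ^ (-γ) := by
      rw [hQ0, show -(lam j) * (n : ℝ) ^ (-γ) = -(lam j * (n : ℝ) ^ (-γ)) from by ring]
      exact one_sub_exp_le _
    have hrm : (r : ℝ) ≤ (m n : ℝ) := by exact_mod_cast hr
    have hts : (n : ℝ) ^ gam N t ≤ (n : ℝ) ^ γ :=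
      Real.rpow_le_rpow_of_exponent_le hn1' (gam_mono N htj)
    have hkey : (n : ℝ) ^ γ * (n : ℝ) ^ (-(2 * γ)) = (n : ℝ) ^ (-γ) := by
      rw [← Real.rpow_add hn0]; ring_nf
    have hδA : ε / (A + 1) * A ≤ ε := by
      rw [div_mul_eq_mul_div, div_le_iff₀ (by linarith)]
      nlinarith
    have hrD : (r : ℝ) * (A * (n : ℝ) ^ (-(2 * γ))) ≤ ε * (n : ℝ) ^ (-γ) := by
      calc (r : ℝ) * (A * (n : ℝ) ^ (-(2 * γ)))
          ≤ (ε / (A + 1) * (n : ℝ) ^ gam N t) * (A * (n : ℝ) ^ (-(2 * γ))) := by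
            apply mul_le_mul_of_nonneg_right (hrm.trans hmn)
            exact mul_nonneg hA0 hx2.le
        _ ≤ (ε / (A + 1) * (n : ℝ) ^ γ) * (A * (n : ℝ) ^ (-(2 * γ))) := by
            apply mul_le_mul_of_nonneg_right _ (mul_nonneg hA0 hx2.le)
            exact mul_le_mul_of_nonneg_left hts hδ.le
        _ = (ε / (A + 1) * A) * ((n : ℝ) ^ γ * (n : ℝ) ^ (-(2 * γ))) := by ring
        _ = (ε / (A + 1) * A) * (n : ℝ) ^ (-γ) := by rw [hkey]
        _ ≤ ε * (n : ℝ) ^ (-γ) := mul_le_mul_of_nonneg_right hδA hnγ.le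
    calc Qfun N η r (sVec N lam n) j
        ≤ Qfun N η 0 (sVec N lam n) j + (r : ℝ) * (A * (n : ℝ) ^ (-(2 * γ))) := hiter
      _ ≤ lam j * (n : ℝ) ^ (-γ) + ε * (n : ℝ) ^ (-γ) := by linarith
      _ = (lam j + ε) * (n : ℝ) ^ (-γ) := by ring

end MainBound
/-- `lim n^{γ_j} Q_{m_n}^{(j)}(s(n)) = λ_j` when `m_n ≪ n^{γ_j}`
(types 0-based: `t = j - 1`, `j ∈ {1,…,N-1}`). -/
theorem Q_limit_early
    (N : ℕ) (hN : 2 ≤ N) (η : ℕ → (Fin N → ℕ) → ℝ) (hA : HypA N η)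
    (t : ℕ) (ht : t + 1 < N)
    (lam : Fin N → ℝ) (hlam : ∀ k, 0 < lam k)
    (m : ℕ → ℕ)
    (hm : Tendsto (fun n : ℕ => (m n : ℝ) / (n : ℝ) ^ gam N t) atTop (nhds 0)) :
    Tendsto
      (fun n : ℕ => (n : ℝ) ^ gam N t * Qfun N η (m n) (sVec N lam n) ⟨t, by omega⟩)
      atTop (nhds (lam ⟨t, by omega⟩)) := by
  have jlt : t < N := by omega
  set jf : Fin N := ⟨t, jlt⟩ with hjf
  have hgoal : (⟨t, by omega⟩ : Fin N) = jf := rfl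
  rw [Metric.tendsto_nhds]
  intro ε hε
  have hup := uniform_upper hA t lam hlam m hm (N - 1 - t) jf (le_refl t) rfl
    (ε / 2) (by linarith)
  have hCb := uniform_upper hA t lam hlam m hm (N - 1 - t) jf (le_refl t) rfl 1 one_pos
  have hlim0 := lim_Q0 lam hlam jf
  set B : ℝ := Bco N η t with hBdef
  have hB0 : 0 ≤ B := Bco_nonneg hA jf
  set γ := gam N t with hγdef
  have hγ0 : 0 < γ := gam_pos N t
  have hlimL : Tendsto (fun n : ℕ =>
      (n : ℝ) ^ γ * (1 - Real.exp (-(lam jf) * (n : ℝ) ^ (-γ)))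
        - B * (lam jf + 1) ^ 2 * ((m n : ℝ) / (n : ℝ) ^ γ)) atTop (nhds (lam jf)) := by
    have h2 := hm.const_mul (B * (lam jf + 1) ^ 2)
    have h3 := hlim0.sub h2
    simpa using h3
  have hLev : ∀ᶠ n : ℕ in atTop,
      lam jf - ε < (n : ℝ) ^ γ * (1 - Real.exp (-(lam jf) * (n : ℝ) ^ (-γ)))
        - B * (lam jf + 1) ^ 2 * ((m n : ℝ) / (n : ℝ) ^ γ) :=
    hlimL.eventually_const_lt (by linarith)
  filter_upwards [hup, hCb, hLev, eventually_ge_atTop 1] with n hupn hCn hLn hn1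
  have hn0 : (0:ℝ) < n := by exact_mod_cast Nat.lt_of_lt_of_le Nat.zero_lt_one hn1
  have hbox := sVec_box lam hlam n
  have hnγ : (0:ℝ) < (n : ℝ) ^ γ := Real.rpow_pos_of_pos hn0 _
  have hnγ' : (0:ℝ) < (n : ℝ) ^ (-γ) := Real.rpow_pos_of_pos hn0 _
  have hprod : (n : ℝ) ^ γ * (n : ℝ) ^ (-γ) = 1 := by
    rw [← Real.rpow_add hn0]; simp
  have hdiv : (m n : ℝ) / (n : ℝ) ^ γ = (m n : ℝ) * (n : ℝ) ^ (-γ) := by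
    rw [Real.rpow_neg hn0.le, div_eq_mul_inv]
  have hQle := hupn (m n) le_rfl
  have hC0 : (0:ℝ) ≤ (lam jf + 1) * (n : ℝ) ^ (-γ) := by
    have := hlam jf; positivity
  have hlow := iter_lower hA hbox jf ((lam jf + 1) * (n : ℝ) ^ (-γ)) hC0 (m n)
    (fun p hp => hCn p hp.le)
  have hQ0 : Qfun N η 0 (sVec N lam n) jf
      = 1 - Real.exp (-(lam jf) * (n : ℝ) ^ (-γ)) := rfl
  rw [Real.dist_eq, abs_lt]
  constructor
  · -- lower bound
    have h1 : (n : ℝ) ^ γ * Qfun N η (m n) (sVec N lam n) jf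
        ≥ (n : ℝ) ^ γ * (Qfun N η 0 (sVec N lam n) jf
          - (m n : ℝ) * (Bco N η jf.1 * ((lam jf + 1) * (n : ℝ) ^ (-γ)) ^ 2)) :=
      mul_le_mul_of_nonneg_left hlow hnγ.le
    have h2 : (n : ℝ) ^ γ * (Qfun N η 0 (sVec N lam n) jf
          - (m n : ℝ) * (Bco N η jf.1 * ((lam jf + 1) * (n : ℝ) ^ (-γ)) ^ 2))
        = (n : ℝ) ^ γ * (1 - Real.exp (-(lam jf) * (n : ℝ) ^ (-γ)))
          - B * (lam jf + 1) ^ 2 * ((m n : ℝ) / (n : ℝ) ^ γ) := by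
      rw [hQ0, hdiv]
      have hBeq : Bco N η jf.1 = B := rfl
      rw [hBeq]
      linear_combination (-(B * (lam jf + 1)^2 * (m n : ℝ) * (n : ℝ) ^ (-γ))) * hprod
    rw [h2] at h1
    linarith
  · -- upper bound
    have h1 : (n : ℝ) ^ γ * Qfun N η (m n) (sVec N lam n) jf
        ≤ (n : ℝ) ^ γ * ((lam jf + ε / 2) * (n : ℝ) ^ (-γ)) :=
      mul_le_mul_of_nonneg_left hQle hnγ.le
    have h2 : (n : ℝ) ^ γ * ((lam jf + ε / 2) * (n : ℝ) ^ (-γ)) = lam jf + ε / 2 := by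
      linear_combination (lam jf + ε / 2) * hprod
    rw [h2] at h1
    linarith
end BD
end
end

section
/- Let b, c > 0 and u, v ∈ [0,1). Define, for y ≥ 0, φ(y) = sqrt(1−v) · ((1−u) + sqrt(1−v) tanh(b c y sqrt(1−v))) / ((1−u) tanh(b c y sqrt(1−v)) + sqrt(1−v)) and X(y) = 1 − φ(y). Then X(0) = u and X is differentiable on [0,∞) with X′(y) = 2 b c ( X(y)²/2 − X(y) + v/2 ) for all y ≥ 0. -/
noncomputable section

lemma my_hasDerivAt_tanh (x : ℝ) :
    HasDerivAt Real.tanh (1 - Real.tanh x ^ 2) x := by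
  have hc : Real.cosh x ≠ 0 := (Real.cosh_pos x).ne'
  have h := (Real.hasDerivAt_sinh x).div (Real.hasDerivAt_cosh x) hc
  have heq : (Real.sinh / Real.cosh) = Real.tanh := by
    funext y; rw [Pi.div_apply, Real.tanh_eq_sinh_div_cosh]
  rw [heq] at h
  refine h.congr_deriv ?_
  rw [Real.tanh_eq_sinh_div_cosh]
  field_simp

/-- `X(y) = 1 - φ(y)`, the generating-function value
`E[u^{U_{ii}(y)} v^{U_{i,i+1}(y)}]` of the two-type limiting branching process
with parameters `b`, `c`. -/
def Xfun (b c u v y : ℝ) : ℝ :=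
  1 - Real.sqrt (1 - v) *
      ((1 - u) + Real.sqrt (1 - v) * Real.tanh (b * c * y * Real.sqrt (1 - v))) /
    ((1 - u) * Real.tanh (b * c * y * Real.sqrt (1 - v)) + Real.sqrt (1 - v))

/-- `X(0) = u` and `X` solves the backward Kolmogorov (Riccati)
equation `X′(y) = 2bc (X(y)²/2 - X(y) + v/2)` on `[0, ∞)`. -/
theorem Xfun_solves_riccati (b c u v : ℝ) (hb : 0 < b) (hc : 0 < c)
    (hu : u ∈ Set.Ico (0 : ℝ) 1) (hv : v ∈ Set.Ico (0 : ℝ) 1) :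
    Xfun b c u v 0 = u ∧
    ∀ y : ℝ, 0 ≤ y →
      HasDerivWithinAt (Xfun b c u v)
        (2 * b * c * (Xfun b c u v y ^ 2 / 2 - Xfun b c u v y + v / 2))
        (Set.Ici 0) y := by
  set s := Real.sqrt (1 - v) with hs
  have hv1 : (0:ℝ) < 1 - v := by linarith [hv.2]
  have hspos : 0 < s := Real.sqrt_pos.mpr hv1
  have hssq : s ^ 2 = 1 - v := Real.sq_sqrt hv1.le
  have ha : (0:ℝ) < 1 - u := by linarith [hu.2]
  constructor
  · have h0 : b * c * 0 * s = 0 := by ring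
    simp only [Xfun, ← hs, h0, Real.tanh_zero, mul_zero, add_zero, zero_mul,
      zero_add]
    rw [mul_comm s (1 - u), mul_div_assoc, div_self hspos.ne', mul_one]
    ring
  · intro y hy
    set a := 1 - u with hadef
    set θ := b * c * y * s with hθ
    have ht0 : 0 ≤ Real.tanh θ := by
      rw [Real.tanh_eq_sinh_div_cosh]
      refine div_nonneg ?_ (Real.cosh_pos θ).le
      have hθ0 : 0 ≤ θ := by positivity
      exact Real.sinh_nonneg_iff.mpr hθ0
    have hden : a * Real.tanh θ + s ≠ 0 := by positivity
    have hθd : HasDerivAt (fun x : ℝ => b * c * x * s) (b * c * s) y := by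
      simpa using ((hasDerivAt_id y).const_mul (b * c)).mul_const s
    have htd : HasDerivAt (fun x : ℝ => Real.tanh (b * c * x * s))
        ((1 - Real.tanh θ ^ 2) * (b * c * s)) y :=
      by have := (my_hasDerivAt_tanh θ).comp y hθd; exact this
    set t' := (1 - Real.tanh θ ^ 2) * (b * c * s) with ht'
    have hnum : HasDerivAt (fun x : ℝ => s * (a + s * Real.tanh (b * c * x * s)))
        (s * (s * t')) y := ((htd.const_mul s).const_add a).const_mul s
    have hdend : HasDerivAt (fun x : ℝ => a * Real.tanh (b * c * x * s) + s)
        (a * t') y := (htd.const_mul a).add_const s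
    have hdiv := hnum.div hdend hden
    have hfun : Xfun b c u v = fun x : ℝ =>
        1 - s * (a + s * Real.tanh (b * c * x * s)) /
          (a * Real.tanh (b * c * x * s) + s) := by
      funext x; simp only [Xfun, hs, hadef]
    have hX : HasDerivAt (Xfun b c u v)
        (-((s * (s * t') * (a * Real.tanh θ + s) -
            s * (a + s * Real.tanh θ) * (a * t')) /
          (a * Real.tanh θ + s) ^ 2)) y := by
      rw [hfun]; exact hdiv.const_sub 1
    have hXy : Xfun b c u v y =
        1 - s * (a + s * Real.tanh θ) / (a * Real.tanh θ + s) := by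
      rw [hfun]
    have heq : -((s * (s * t') * (a * Real.tanh θ + s) -
            s * (a + s * Real.tanh θ) * (a * t')) /
          (a * Real.tanh θ + s) ^ 2)
        = 2 * b * c * (Xfun b c u v y ^ 2 / 2 - Xfun b c u v y + v / 2) := by
      rw [hXy, ht']
      have hvv : v = 1 - s ^ 2 := by linarith [hssq]
      rw [hvv]
      field_simp
      ring
    rw [← heq]
    exact hX.hasDerivWithinAt
end
end
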